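/- Let ρ be a d×d density matrix and let A₁, …, Aₙ be d×d complex matrices, each Hermitian and unitary (A_iᴴ = A_i and A_i² = 1), such that for all i ≠ j either A_i·A_j = A_j·A_i or A_i·A_j = −A_j·A_i. Then there exist a vector x ∈ ℝⁿ and a real symmetric n×n matrix X such that: the bordered (n+1)×(n+1) matrix [[1, xᵀ],[x, X]] is positive semidefinite; X_{ii} = x_i for all i; X_{ij} = 0 whenever A_i·A_j = −A_j·A_i; and Σᵢ X_{ii} = Σᵢ ( Re tr(ρ·A_i) )². In particular, Σᵢ (tr(ρ·A_i))² is at most the Lovász theta number ϑ(G) of the anticommutativity graph G (with i ∼ j iff A_i and A_j anticommute). -/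

import Mathlib

open Matrix ComplexOrder

private lemma trace_re_nonneg_aux (d : ℕ) (ρ B : Matrix (Fin d) (Fin d) ℂ)
    (hρ : ρ.PosSemidef) (hB : Bᴴ = B) : 0 ≤ (ρ * (B * B)).trace.re := by
  have h1 : (ρ * (B * B)).trace = (B * ρ * Bᴴ).trace := by
    rw [hB, ← Matrix.mul_assoc, Matrix.trace_mul_cycle]
  have hM : (B * ρ * Bᴴ).PosSemidef := hρ.mul_mul_conjTranspose_same B
  rw [h1, Matrix.trace, Complex.re_sum]
  refine Finset.sum_nonneg fun k _ => ?_
  simpa [dotProduct, mulVec, Pi.single_apply, Matrix.diag] using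
    hM.re_dotProduct_nonneg (Pi.single k 1)

private lemma trace_re_symm_aux (d : ℕ) (ρ B C : Matrix (Fin d) (Fin d) ℂ)
    (hρ : ρᴴ = ρ) (hB : Bᴴ = B) (hC : Cᴴ = C) :
    (ρ * (B * C)).trace.re = (ρ * (C * B)).trace.re := by
  have : (ρ * (C * B)).trace = star ((ρ * (B * C)).trace) := by
    rw [← Matrix.trace_conjTranspose, Matrix.conjTranspose_mul, Matrix.conjTranspose_mul,
      hB, hC, hρ, Matrix.trace_mul_cycle, Matrix.mul_assoc]
  rw [this, Complex.star_def, Complex.conj_re]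

private lemma gram_psd_aux (d n : ℕ) (ρ : Matrix (Fin d) (Fin d) ℂ) (hρ : ρ.PosSemidef)
    (A' : Fin 1 ⊕ Fin n → Matrix (Fin d) (Fin d) ℂ)
    (hherm' : ∀ p, (A' p)ᴴ = A' p) (a' : Fin 1 ⊕ Fin n → ℝ) :
    (Matrix.of fun p q => a' p * a' q * ((ρ * (A' p * A' q)).trace.re) :
      Matrix (Fin 1 ⊕ Fin n) (Fin 1 ⊕ Fin n) ℝ).PosSemidef := by
  refine Matrix.PosSemidef.of_dotProduct_mulVec_nonneg ?_ ?_
  · ext p q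
    simp only [Matrix.conjTranspose_apply, Matrix.of_apply, star_trivial]
    rw [trace_re_symm_aux d ρ _ _ hρ.isHermitian.eq (hherm' q) (hherm' p)]
    ring
  · intro v
    set w : Fin 1 ⊕ Fin n → ℂ := fun p => ((v p * a' p : ℝ) : ℂ) with hw
    set B : Matrix (Fin d) (Fin d) ℂ := ∑ p, w p • A' p with hBdef
    have hB : Bᴴ = B := by
      rw [hBdef]
      simp only [Matrix.conjTranspose_sum, Matrix.conjTranspose_smul, hherm']
      congr 1; ext p; rw [hw]; simp [Complex.star_def]
    have key := trace_re_nonneg_aux d ρ B hρ hB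
    have hexp : (ρ * (B * B)).trace = ∑ p, ∑ q, (w p * w q) * (ρ * (A' p * A' q)).trace := by
      rw [hBdef, Finset.sum_mul_sum]
      simp only [Matrix.smul_mul, Matrix.mul_smul, smul_smul, Finset.mul_sum,
        Matrix.mul_sum, Matrix.trace_sum, Matrix.trace_smul, smul_eq_mul]
      exact Finset.sum_congr rfl fun p _ => Finset.sum_congr rfl fun q _ => by ring
    have hre : (ρ * (B * B)).trace.re
        = ∑ p, ∑ q, (v p * a' p) * (v q * a' q) * (ρ * (A' p * A' q)).trace.re := by
      rw [hexp, Complex.re_sum]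
      refine Finset.sum_congr rfl fun p _ => ?_
      rw [Complex.re_sum]
      refine Finset.sum_congr rfl fun q _ => ?_
      rw [hw]
      simp [← Complex.ofReal_mul, Complex.re_ofReal_mul]
    have hq : star v ⬝ᵥ (Matrix.of fun p q => a' p * a' q * ((ρ * (A' p * A' q)).trace.re) :
          Matrix (Fin 1 ⊕ Fin n) (Fin 1 ⊕ Fin n) ℝ) *ᵥ v
        = ∑ p, ∑ q, (v p * a' p) * (v q * a' q) * (ρ * (A' p * A' q)).trace.re := by
      simp only [star_trivial, dotProduct, mulVec, Finset.mul_sum, Matrix.of_apply]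
      exact Finset.sum_congr rfl fun p _ => Finset.sum_congr rfl fun q _ => by ring
    rw [hq, ← hre]
    exact key

/-- For a density matrix `ρ` and Hermitian unitary observables
`A₁, …, Aₙ` that pairwise commute or anticommute, the vector of squared expectations
is realized by a feasible point of the Lovász theta SDP of the anticommutativity
graph; in particular `Σᵢ (Re tr(ρAᵢ))² ≤ ϑ(G)`. -/
theorem squared_expectations_feasible_for_lovasz_theta (d n : ℕ)
    (ρ : Matrix (Fin d) (Fin d) ℂ) (hρ : ρ.PosSemidef) (htr : ρ.trace = 1)
    (A : Fin n → Matrix (Fin d) (Fin d) ℂ)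
    (hherm : ∀ i, (A i)ᴴ = A i) (hunit : ∀ i, A i * A i = 1)
    (hcomm : ∀ i j, i ≠ j → A i * A j = A j * A i ∨ A i * A j = -(A j * A i)) :
    (∃ (x : Fin n → ℝ) (X : Matrix (Fin n) (Fin n) ℝ),
      X.IsSymm ∧
      (Matrix.fromBlocks (1 : Matrix (Fin 1) (Fin 1) ℝ)
        (Matrix.of fun (_ : Fin 1) j => x j)
        (Matrix.of fun i (_ : Fin 1) => x i) X).PosSemidef ∧
      (∀ i, X i i = x i) ∧
      (∀ i j, A i * A j = -(A j * A i) → X i j = 0) ∧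
      ∑ i, X i i = ∑ i, ((ρ * A i).trace.re) ^ 2) ∧
    ∑ i, ((ρ * A i).trace.re) ^ 2 ≤
      sSup {t : ℝ | ∃ (x : Fin n → ℝ) (X : Matrix (Fin n) (Fin n) ℝ),
        X.IsSymm ∧
        (Matrix.fromBlocks (1 : Matrix (Fin 1) (Fin 1) ℝ)
          (Matrix.of fun (_ : Fin 1) j => x j)
          (Matrix.of fun i (_ : Fin 1) => x i) X).PosSemidef ∧
        (∀ i, X i i = x i) ∧
        (∀ i j, A i * A j = -(A j * A i) → X i j = 0) ∧
        t = ∑ i, X i i} := by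
  -- abbreviations
  set a : Fin n → ℝ := fun i => ((ρ * A i).trace.re) with ha
  have hρ1 : (ρ * (1 : Matrix (Fin d) (Fin d) ℂ)).trace.re = 1 := by
    rw [Matrix.mul_one, htr]; simp
  -- the symmetric expectation kernel
  set m : Fin n → Fin n → ℝ := fun i j => ((ρ * (A i * A j)).trace.re) with hm
  have hmsymm : ∀ i j, m i j = m j i := fun i j =>
    trace_re_symm_aux d ρ _ _ hρ.isHermitian.eq (hherm i) (hherm j)
  have hmdiag : ∀ i, m i i = 1 := fun i => by rw [hm]; simp only [hunit]; exact hρ1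
  have hmanti : ∀ i j, A i * A j = -(A j * A i) → m i j = 0 := by
    intro i j hij
    have h1 : m i j = -(m j i) := by
      rw [hm]; simp only [hij, Matrix.mul_neg, Matrix.trace_neg, Complex.neg_re]
    have := hmsymm i j
    linarith [h1, this]
  -- the witnesses
  set x : Fin n → ℝ := fun i => (a i) ^ 2 with hx
  set X : Matrix (Fin n) (Fin n) ℝ := Matrix.of fun i j => a i * a j * m i j with hX
  have hXsymm : X.IsSymm := by
    ext i j
    simp only [hX, Matrix.transpose_apply, Matrix.of_apply, hmsymm i j]
    ring
  have hXdiag : ∀ i, X i i = x i := by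
    intro i
    simp only [hX, hx, Matrix.of_apply, hmdiag i]
    ring
  have hXanti : ∀ i j, A i * A j = -(A j * A i) → X i j = 0 := by
    intro i j hij
    simp only [hX, Matrix.of_apply, hmanti i j hij, mul_zero]
  -- the bordered matrix is a Gram-type matrix
  set A' : Fin 1 ⊕ Fin n → Matrix (Fin d) (Fin d) ℂ := Sum.elim (fun _ => 1) A with hA'
  set a' : Fin 1 ⊕ Fin n → ℝ := Sum.elim (fun _ => 1) a with ha'
  have hherm' : ∀ p, (A' p)ᴴ = A' p := by
    rintro (p | p) <;> simp [hA', hherm]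
  have hNeq : (Matrix.fromBlocks (1 : Matrix (Fin 1) (Fin 1) ℝ)
        (Matrix.of fun (_ : Fin 1) j => x j)
        (Matrix.of fun i (_ : Fin 1) => x i) X)
      = (Matrix.of fun p q => a' p * a' q * ((ρ * (A' p * A' q)).trace.re) :
        Matrix (Fin 1 ⊕ Fin n) (Fin 1 ⊕ Fin n) ℝ) := by
    ext p q
    rcases p with p | p <;> rcases q with q | q
    · simp only [Matrix.fromBlocks_apply₁₁, Matrix.of_apply, hA', ha', Sum.elim_inl,
        one_mul, mul_one, Matrix.mul_one]
      rw [Subsingleton.elim p q, Matrix.one_apply_eq, htr]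
      simp
    · simp only [Matrix.fromBlocks_apply₁₂, Matrix.of_apply, hA', ha', Sum.elim_inl,
        Sum.elim_inr, one_mul, Matrix.one_mul]
      simp only [ha]
      ring
    · simp only [Matrix.fromBlocks_apply₂₁, Matrix.of_apply, hA', ha', Sum.elim_inl,
        Sum.elim_inr, mul_one, Matrix.mul_one]
      simp only [ha]
      ring
    · simp only [Matrix.fromBlocks_apply₂₂, hX, Matrix.of_apply, hA', ha', Sum.elim_inr, hm]
  have hNpsd := hNeq ▸ gram_psd_aux d n ρ hρ A' hherm' a'
  have hsum : ∑ i, X i i = ∑ i, ((ρ * A i).trace.re) ^ 2 := by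
    refine Finset.sum_congr rfl fun i _ => ?_
    rw [hXdiag i, hx, ha]
  refine ⟨⟨x, X, hXsymm, hNpsd, hXdiag, hXanti, hsum⟩, ?_⟩
  -- bound by the supremum
  have hmem : (∑ i, ((ρ * A i).trace.re) ^ 2) ∈
      {t : ℝ | ∃ (x : Fin n → ℝ) (X : Matrix (Fin n) (Fin n) ℝ),
        X.IsSymm ∧
        (Matrix.fromBlocks (1 : Matrix (Fin 1) (Fin 1) ℝ)
          (Matrix.of fun (_ : Fin 1) j => x j)
          (Matrix.of fun i (_ : Fin 1) => x i) X).PosSemidef ∧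
        (∀ i, X i i = x i) ∧
        (∀ i j, A i * A j = -(A j * A i) → X i j = 0) ∧
        t = ∑ i, X i i} :=
    ⟨x, X, hXsymm, hNpsd, hXdiag, hXanti, hsum.symm⟩
  refine le_csSup ⟨(n : ℝ), ?_⟩ hmem
  rintro t ⟨y, Y, hYsymm, hYpsd, hYdiag, hYanti, rfl⟩
  have hbound : ∀ i, Y i i ≤ 1 := by
    intro i
    set e : Fin 2 → Fin 1 ⊕ Fin n := ![Sum.inl 0, Sum.inr i] with he
    have hsub := hYpsd.submatrix e
    have h0 : 0 ≤ Y i i := by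
      have := hsub.dotProduct_mulVec_nonneg ![0, 1]
      simpa [he, dotProduct, mulVec, Fin.sum_univ_two, Matrix.submatrix_apply,
        Matrix.fromBlocks_apply₂₂] using this
    have h1 : 0 ≤ Y i i - Y i i ^ 2 := by
      have := hsub.dotProduct_mulVec_nonneg ![Y i i, -1]
      have h2 : (0:ℝ) ≤ Y i i * (1 * Y i i + y i * (-1)) + (-1) * (y i * Y i i + Y i i * (-1)) := by
        simpa [he, dotProduct, mulVec, Fin.sum_univ_two, Matrix.submatrix_apply,
          Matrix.fromBlocks_apply₁₁, Matrix.fromBlocks_apply₁₂, Matrix.fromBlocks_apply₂₁,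
          Matrix.fromBlocks_apply₂₂, Matrix.one_apply] using this
      have hy : y i = Y i i := (hYdiag i).symm
      nlinarith [h2, hy]
    nlinarith [h0, h1]
  calc ∑ i, Y i i ≤ ∑ _i : Fin n, (1:ℝ) := Finset.sum_le_sum fun i _ => hbound i
    _ = n := by simp
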